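/- For a probability measure $\mu$ and fixed $q > 0$, the function $f(p) = \frac{spq}{(q-p)(s-2p)}$ satisfies $f'(p) = \frac{sq(sq-2p^2)}{(q-p)^2(s-2p)^2} > 0$ whenever $0 < p < q$ and $s > 2p$; consequently the $(p,q)$-Wasserstein dimension is non-decreasing in $p$: if $0 < p_1 \le p_2 < q$ then $d^\star_{p_1,q}(\mu) \le d^\star_{p_2,q}(\mu)$. -/

import Mathlib

open MeasureTheory Filter ENNReal

/-- The `ε`-covering number of a set `S`: the minimal number of `ε`-balls (with arbitrary
centers) needed to cover `S`. -/
noncomputable def covNum {X : Type*} [MetricSpace X] (ε : ℝ) (S : Set X) : ℝ≥0∞ :=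
  ⨅ (C : Finset X) (_ : S ⊆ ⋃ x ∈ C, Metric.ball x ε), (C.card : ℝ≥0∞)

/-- The `(ε, τ)`-covering number of a measure `μ`: the minimal `ε`-covering number over sets
of `μ`-measure at least `1 - τ`. -/
noncomputable def measCovNum {X : Type*} [MetricSpace X] [MeasurableSpace X]
    (μ : Measure X) (ε τ : ℝ) : ℝ≥0∞ :=
  ⨅ (S : Set X) (_ : ENNReal.ofReal (1 - τ) ≤ μ S), covNum ε S

/-- The defining set of the `(p,q)`-Wasserstein dimension. -/
noncomputable def wassersteinDimSet {X : Type*} [MetricSpace X] [MeasurableSpace X]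
    (μ : Measure X) (p q : ℝ) : Set ℝ :=
  {s | 2 * p < s ∧
    Filter.limsup
      (fun ε : ℝ =>
        Real.log (measCovNum μ ε (ε ^ (s * p * q / ((q - p) * (s - 2 * p))))).toReal /
          Real.log (1 / ε))
      (nhdsWithin 0 (Set.Ioi 0)) ≤ s}

/-- The `(p,q)`-Wasserstein dimension `d⋆_{p,q}(μ)`. -/
noncomputable def dStar {X : Type*} [MetricSpace X] [MeasurableSpace X]
    (μ : Measure X) (p q : ℝ) : ℝ :=
  sInf (wassersteinDimSet μ p q)

set_option linter.unusedSectionVars false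
set_option linter.unusedVariables false

section Aux

variable {X : Type*} [MetricSpace X] [MeasurableSpace X] (μ : Measure X)

lemma covNum_mono_set {ε : ℝ} {S T : Set X} (h : S ⊆ T) : covNum ε S ≤ covNum ε T :=
  le_iInf₂ fun C hC => iInf₂_le C (h.trans hC)

lemma covNum_anti_eps {ε ε' : ℝ} (h : ε ≤ ε') {S : Set X} : covNum ε' S ≤ covNum ε S :=
  le_iInf₂ fun C hC =>
    iInf₂_le C (hC.trans (Set.iUnion₂_mono fun x _ => Metric.ball_subset_ball h))

lemma one_le_covNum {ε : ℝ} {S : Set X} (h : S.Nonempty) : 1 ≤ covNum ε S := by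
  refine le_iInf₂ fun C hC => ?_
  obtain ⟨x, hx⟩ := h
  obtain ⟨y, hy, -⟩ := Set.mem_iUnion₂.1 (hC hx)
  exact_mod_cast Finset.card_pos.mpr ⟨y, hy⟩

lemma measCovNum_anti {ε τ τ' : ℝ} (h : τ ≤ τ') : measCovNum μ ε τ' ≤ measCovNum μ ε τ := by
  refine le_iInf fun S => le_iInf fun hS => ?_
  have h2 : ENNReal.ofReal (1 - τ') ≤ μ S :=
    le_trans (ENNReal.ofReal_le_ofReal (by linarith)) hS
  calc measCovNum μ ε τ' ≤ ⨅ (_ : ENNReal.ofReal (1 - τ') ≤ μ S), covNum ε S :=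
        iInf_le (fun S => ⨅ (_ : ENNReal.ofReal (1 - τ') ≤ μ S), covNum ε S) S
    _ ≤ covNum ε S := iInf_le _ h2

lemma measCovNum_anti_eps {ε ε' τ : ℝ} (h : ε ≤ ε') : measCovNum μ ε' τ ≤ measCovNum μ ε τ :=
  le_iInf₂ fun S hS => (iInf₂_le S hS).trans (covNum_anti_eps h)

lemma one_le_measCovNum [IsProbabilityMeasure μ] {ε τ : ℝ} (hτ : τ < 1) :
    1 ≤ measCovNum μ ε τ := by
  refine le_iInf₂ fun S hS => one_le_covNum ?_
  rcases S.eq_empty_or_nonempty with rfl | h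
  · exfalso
    simp only [measure_empty, nonpos_iff_eq_zero, ENNReal.ofReal_eq_zero] at hS
    linarith
  · exact h

lemma eventually_Ioo {b : ℝ} (hb : 0 < b) :
    ∀ᶠ ε in nhdsWithin (0:ℝ) (Set.Ioi 0), ε ∈ Set.Ioo (0:ℝ) b := by
  have h1 : ∀ᶠ ε in nhdsWithin (0:ℝ) (Set.Ioi 0), ε ∈ Set.Ioi (0:ℝ) :=
    eventually_mem_nhdsWithin
  have h2 : ∀ᶠ ε in nhdsWithin (0:ℝ) (Set.Ioi 0), ε < b :=
    Filter.Eventually.filter_mono nhdsWithin_le_nhds (eventually_lt_nhds hb)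
  filter_upwards [h1, h2] with ε hε1 hε2
  exact ⟨hε1, hε2⟩

lemma eventually_top {a ε₀ : ℝ} (ha : 0 ≤ a) (h0 : 0 < ε₀)
    (htop : measCovNum μ ε₀ (ε₀ ^ a) = ⊤) :
    ∀ᶠ ε in nhdsWithin (0:ℝ) (Set.Ioi 0), measCovNum μ ε (ε ^ a) = ⊤ := by
  filter_upwards [eventually_Ioo h0] with ε hε
  have h1 : ε ^ a ≤ ε₀ ^ a := Real.rpow_le_rpow hε.1.le hε.2.le ha
  have h2 : measCovNum μ ε₀ (ε₀ ^ a) ≤ measCovNum μ ε (ε ^ a) :=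
    le_trans (measCovNum_anti μ h1) (measCovNum_anti_eps μ hε.2.le)
  rw [htop] at h2
  exact top_le_iff.1 h2

lemma G_nonneg [IsProbabilityMeasure μ] {a : ℝ} (ha : 0 < a) :
    ∀ᶠ ε in nhdsWithin (0:ℝ) (Set.Ioi 0),
      0 ≤ Real.log (measCovNum μ ε (ε ^ a)).toReal / Real.log (1 / ε) := by
  filter_upwards [eventually_Ioo one_pos] with ε hε
  apply div_nonneg
  · rcases eq_or_ne (measCovNum μ ε (ε ^ a)) ⊤ with h | h
    · simp [h]
    · have h1 : (1 : ℝ≥0∞) ≤ measCovNum μ ε (ε ^ a) :=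
        one_le_measCovNum μ (Real.rpow_lt_one hε.1.le hε.2 ha)
      have h2 : (1 : ℝ) ≤ (measCovNum μ ε (ε ^ a)).toReal := by
        rw [← ENNReal.toReal_one]
        exact ENNReal.toReal_mono h h1
      exact Real.log_nonneg h2
  · exact Real.log_nonneg ((one_le_div hε.1).2 hε.2.le)

lemma limsup_eq_zero_of_unbounded {f : ℝ → ℝ}
    (h : ¬ Filter.IsBoundedUnder (· ≤ ·) (nhdsWithin (0:ℝ) (Set.Ioi 0)) f) :
    Filter.limsup f (nhdsWithin (0:ℝ) (Set.Ioi 0)) = 0 := by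
  rw [Filter.limsup_eq]
  convert Real.sInf_empty using 2
  · rfl
  rw [Set.eq_empty_iff_forall_notMem]
  intro c hc
  exact h ⟨c, Filter.eventually_map.mpr hc⟩

lemma limsup_G_eq_zero_of_top {a : ℝ} (ha : 0 < a) {ε₀ : ℝ} (h0 : 0 < ε₀)
    (htop : measCovNum μ ε₀ (ε₀ ^ a) = ⊤) :
    Filter.limsup (fun ε : ℝ => Real.log (measCovNum μ ε (ε ^ a)).toReal / Real.log (1 / ε))
      (nhdsWithin (0:ℝ) (Set.Ioi 0)) = 0 := by
  have h := eventually_top μ ha.le h0 htop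
  have hcongr : Filter.limsup
      (fun ε : ℝ => Real.log (measCovNum μ ε (ε ^ a)).toReal / Real.log (1 / ε))
      (nhdsWithin (0:ℝ) (Set.Ioi 0)) =
      Filter.limsup (fun _ : ℝ => (0:ℝ)) (nhdsWithin (0:ℝ) (Set.Ioi 0)) :=
    Filter.limsup_congr (h.mono fun ε hε => by simp [hε])
  rw [hcongr]
  exact Filter.limsup_const 0

lemma limsup_G_mono [IsProbabilityMeasure μ] {a a' : ℝ} (ha' : 0 < a') (haa : a' ≤ a)
    (hfin : ∀ ε : ℝ, 0 < ε → ε < 1 → measCovNum μ ε (ε ^ a) ≠ ⊤)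
    (hbdd : Filter.IsBoundedUnder (· ≤ ·) (nhdsWithin (0:ℝ) (Set.Ioi 0))
      (fun ε : ℝ => Real.log (measCovNum μ ε (ε ^ a)).toReal / Real.log (1 / ε))) :
    Filter.limsup (fun ε : ℝ => Real.log (measCovNum μ ε (ε ^ a')).toReal / Real.log (1 / ε))
        (nhdsWithin (0:ℝ) (Set.Ioi 0)) ≤
      Filter.limsup (fun ε : ℝ => Real.log (measCovNum μ ε (ε ^ a)).toReal / Real.log (1 / ε))
        (nhdsWithin (0:ℝ) (Set.Ioi 0)) := by
  have hle : (fun ε : ℝ => Real.log (measCovNum μ ε (ε ^ a')).toReal / Real.log (1 / ε))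
      ≤ᶠ[nhdsWithin (0:ℝ) (Set.Ioi 0)]
      (fun ε : ℝ => Real.log (measCovNum μ ε (ε ^ a)).toReal / Real.log (1 / ε)) := by
    filter_upwards [eventually_Ioo one_pos] with ε hε
    have h1 : ε ^ a ≤ ε ^ a' := Real.rpow_le_rpow_of_exponent_ge hε.1 hε.2.le haa
    have h2 : measCovNum μ ε (ε ^ a') ≤ measCovNum μ ε (ε ^ a) := measCovNum_anti μ h1
    have h3 := hfin ε hε.1 hε.2
    have h4 : (1 : ℝ≥0∞) ≤ measCovNum μ ε (ε ^ a') :=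
      one_le_measCovNum μ (Real.rpow_lt_one hε.1.le hε.2 ha')
    have h5 : (1 : ℝ) ≤ (measCovNum μ ε (ε ^ a')).toReal := by
      rw [← ENNReal.toReal_one]
      exact ENNReal.toReal_mono (ne_top_of_le_ne_top h3 h2) h4
    have h6 : (measCovNum μ ε (ε ^ a')).toReal ≤ (measCovNum μ ε (ε ^ a)).toReal :=
      ENNReal.toReal_mono h3 h2
    have h7 := Real.log_le_log (by linarith) h6
    have h8 : 0 < Real.log (1 / ε) := Real.log_pos ((one_lt_div hε.1).2 hε.2)
    exact div_le_div_of_nonneg_right h7 h8.le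
  refine Filter.limsup_le_limsup hle ?_ hbdd
  exact Filter.isCoboundedUnder_le_of_eventually_le _ (G_nonneg μ ha')

lemma expA_mono {q p p' s s' : ℝ} (hq : 0 < q) (hp : 0 < p) (hpp' : p ≤ p') (hp'q : p' < q)
    (hs : 2 * p' < s) (hss' : s ≤ s') :
    s' * p * q / ((q - p) * (s' - 2 * p)) ≤ s * p' * q / ((q - p') * (s - 2 * p')) := by
  have hp' : 0 < p' := lt_of_lt_of_le hp hpp'
  have hd1 : 0 < (q - p) * (s' - 2 * p) := mul_pos (by linarith) (by linarith)
  have hd2 : 0 < (q - p') * (s - 2 * p') := mul_pos (by linarith) (by linarith)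
  rw [div_le_div_iff₀ hd1 hd2]
  have key : s * p' * q * ((q - p) * (s' - 2 * p)) - s' * p * q * ((q - p') * (s - 2 * p')) =
      q * ((p' - p) * s * (q * s' - 2 * p * p') + 2 * p * p' * ((q - p') * (s' - s))) := by
    ring
  have t0 : 0 < q * s' - 2 * p * p' := by nlinarith
  have t1 : 0 ≤ (p' - p) * s * (q * s' - 2 * p * p') :=
    mul_nonneg (mul_nonneg (by linarith) (by linarith)) t0.le
  have t2 : 0 ≤ 2 * p * p' * ((q - p') * (s' - s)) := by
    apply mul_nonneg (by positivity)
    exact mul_nonneg (by linarith) (by linarith)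
  nlinarith [key, t1, t2, hq]

lemma claimD [IsProbabilityMeasure μ] {q p₁ p₂ : ℝ} (hq : 0 < q) (hp₁ : 0 < p₁)
    (h12 : p₁ ≤ p₂) (h2q : p₂ < q) {s : ℝ} (hs : s ∈ wassersteinDimSet μ p₂ q) :
    ∃ s', s' ≤ s ∧ s' ∈ wassersteinDimSet μ p₁ q := by
  obtain ⟨hs1, hs2⟩ := hs
  have hp₂ : 0 < p₂ := lt_of_lt_of_le hp₁ h12
  have hs0 : 0 < s := by linarith
  set a := s * p₂ * q / ((q - p₂) * (s - 2 * p₂)) with ha_def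
  have hd₂ : 0 < (q - p₂) * (s - 2 * p₂) := mul_pos (by linarith) (by linarith)
  have ha : 0 < a := div_pos (by positivity) hd₂
  have haeq : a * ((q - p₂) * (s - 2 * p₂)) = s * p₂ * q := div_mul_cancel₀ _ hd₂.ne'
  have hnum : 0 < q * (s * q * (p₂ - p₁) + 2 * p₁ * p₂ * (q - p₂)) := by
    apply mul_pos hq
    have : 0 ≤ s * q * (p₂ - p₁) := mul_nonneg (by positivity) (by linarith)
    nlinarith [mul_pos (mul_pos hp₁ hp₂) (sub_pos.2 h2q)]
  have hkey : (a * (q - p₁) - p₁ * q) * ((q - p₂) * (s - 2 * p₂)) =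
      q * (s * q * (p₂ - p₁) + 2 * p₁ * p₂ * (q - p₂)) := by
    linear_combination (q - p₁) * haeq
  have hD : 0 < a * (q - p₁) - p₁ * q := by nlinarith [hkey, hnum, hd₂]
  set s'' := 2 * p₁ * a * (q - p₁) / (a * (q - p₁) - p₁ * q) with hs''_def
  have hs''_1 : 2 * p₁ < s'' := by
    rw [hs''_def, lt_div_iff₀ hD]
    nlinarith [mul_pos (mul_pos hp₁ hp₁) hq]
  have hs''_le : s'' ≤ s := by
    rw [hs''_def, div_le_iff₀ hD]
    have hidT : (a * (q - p₁) * (s - 2 * p₁) - s * (p₁ * q)) * ((q - p₂) * (s - 2 * p₂)) =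
        s * q * ((p₂ - p₁) * (s * q - 2 * p₁ * p₂)) := by
      linear_combination ((q - p₁) * (s - 2 * p₁)) * haeq
    have h2 : 0 ≤ s * q * ((p₂ - p₁) * (s * q - 2 * p₁ * p₂)) := by
      apply mul_nonneg (by positivity)
      apply mul_nonneg (by linarith)
      nlinarith
    nlinarith [hidT, h2, hd₂]
  have hden : ((q - p₁) * (s'' - 2 * p₁)) ≠ 0 :=
    (_root_.mul_pos (by linarith : (0:ℝ) < q - p₁) (by linarith : (0:ℝ) < s'' - 2 * p₁)).ne'
  have hs''D : s'' * (a * (q - p₁) - p₁ * q) = 2 * p₁ * a * (q - p₁) := by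
    rw [hs''_def]
    exact div_mul_cancel₀ _ hD.ne'
  have he : s'' * p₁ * q / ((q - p₁) * (s'' - 2 * p₁)) = a := by
    rw [div_eq_iff hden]
    linear_combination (-1 : ℝ) * hs''D
  by_cases htop : ∃ ε₀ : ℝ, 0 < ε₀ ∧ ε₀ < 1 ∧ measCovNum μ ε₀ (ε₀ ^ a) = ⊤
  · obtain ⟨ε₀, hε₀, -, htop⟩ := htop
    refine ⟨s'', hs''_le, hs''_1, ?_⟩
    rw [he, limsup_G_eq_zero_of_top μ ha hε₀ htop]
    linarith
  · push_neg at htop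
    by_cases hbdd : Filter.IsBoundedUnder (· ≤ ·) (nhdsWithin (0:ℝ) (Set.Ioi 0))
        (fun ε : ℝ => Real.log (measCovNum μ ε (ε ^ a)).toReal / Real.log (1 / ε))
    · refine ⟨s, le_refl s, by linarith, ?_⟩
      have ha₁pos : 0 < s * p₁ * q / ((q - p₁) * (s - 2 * p₁)) := by
        apply div_pos (by positivity)
        exact mul_pos (by linarith) (by linarith)
      have ha₁le : s * p₁ * q / ((q - p₁) * (s - 2 * p₁)) ≤ a := by
        rw [ha_def]
        exact expA_mono hq hp₁ h12 h2q hs1 (le_refl s)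
      exact (limsup_G_mono μ ha₁pos ha₁le htop hbdd).trans hs2
    · refine ⟨s'', hs''_le, hs''_1, ?_⟩
      rw [he, limsup_eq_zero_of_unbounded hbdd]
      linarith

lemma W_nonempty [IsProbabilityMeasure μ] {q p : ℝ} (hq : 0 < q) (hp : 0 < p) (hpq : p < q) :
    (wassersteinDimSet μ p q).Nonempty := by
  have hqp : 0 < q - p := by linarith
  set c := p * q / (q - p) + 1 with hc_def
  have hc1 : 1 < c := by
    have h0 : 0 < p * q / (q - p) := div_pos (by positivity) hqp
    rw [hc_def]
    linarith [h0]
  have hcpos : 0 < c := by linarith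
  have hcq : c * (q - p) = p * q + (q - p) := by
    rw [hc_def, add_mul, div_mul_cancel₀ _ hqp.ne', one_mul]
  set u₀ := 2 * p * c with hu₀_def
  have hu₀ : 2 * p < u₀ := by
    rw [hu₀_def]
    nlinarith [hc1, hp]
  have hdu : 0 < (q - p) * (u₀ - 2 * p) := mul_pos hqp (by linarith)
  have hA : u₀ * p * q / ((q - p) * (u₀ - 2 * p)) = c := by
    rw [div_eq_iff hdu.ne']
    rw [hu₀_def]
    linear_combination (-(2 * p * c)) * hcq
  by_cases htop : ∃ ε₀ : ℝ, 0 < ε₀ ∧ ε₀ < 1 ∧ measCovNum μ ε₀ (ε₀ ^ c) = ⊤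
  · obtain ⟨ε₀, h1, -, h3⟩ := htop
    refine ⟨u₀, hu₀, ?_⟩
    rw [hA, limsup_G_eq_zero_of_top μ hcpos h1 h3, hu₀_def]
    positivity
  · push_neg at htop
    by_cases hbdd : Filter.IsBoundedUnder (· ≤ ·) (nhdsWithin (0:ℝ) (Set.Ioi 0))
        (fun ε : ℝ => Real.log (measCovNum μ ε (ε ^ c)).toReal / Real.log (1 / ε))
    · set L := Filter.limsup
        (fun ε : ℝ => Real.log (measCovNum μ ε (ε ^ c)).toReal / Real.log (1 / ε))
        (nhdsWithin (0:ℝ) (Set.Ioi 0)) with hL_def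
      set u := max u₀ (max L (2 * p + 1)) with hu_def
      have hu2p : 2 * p < u := by
        have : 2 * p + 1 ≤ u := le_trans (le_max_right _ _) (le_max_right _ _)
        linarith
      have huu₀ : u₀ ≤ u := le_max_left _ _
      refine ⟨u, hu2p, ?_⟩
      have hapos : 0 < u * p * q / ((q - p) * (u - 2 * p)) := by
        apply div_pos (by positivity)
        exact mul_pos hqp (by linarith)
      have hale : u * p * q / ((q - p) * (u - 2 * p)) ≤ c := by
        rw [← hA]
        exact expA_mono hq hp (le_refl p) hpq hu₀ huu₀
      have h1 := limsup_G_mono μ hapos hale htop hbdd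
      have h2 : L ≤ u := le_trans (le_max_left _ _) (le_max_right _ _)
      exact le_trans h1 h2
    · refine ⟨u₀, hu₀, ?_⟩
      rw [hA, limsup_eq_zero_of_unbounded hbdd, hu₀_def]
      positivity

end Aux

/-- **Monotonicity in `p`:** the map `p ↦ s p q / ((q-p)(s-2p))` has positive derivative
`s q (s q - 2p²)/((q-p)²(s-2p)²)` for `0 < p < q`, `s > 2p`; consequently the
`(p,q)`-Wasserstein dimension is non-decreasing in `p`. -/
theorem dStar_monotone_in_p {X : Type*} [MetricSpace X] [MeasurableSpace X]
    (μ : Measure X) [IsProbabilityMeasure μ] (q : ℝ) (hq : 0 < q) :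
    (∀ p s : ℝ, 0 < p → p < q → 2 * p < s →
      HasDerivAt (fun p' : ℝ => s * p' * q / ((q - p') * (s - 2 * p')))
        (s * q * (s * q - 2 * p ^ 2) / ((q - p) ^ 2 * (s - 2 * p) ^ 2)) p ∧
      0 < s * q * (s * q - 2 * p ^ 2) / ((q - p) ^ 2 * (s - 2 * p) ^ 2)) ∧
    (∀ p₁ p₂ : ℝ, 0 < p₁ → p₁ ≤ p₂ → p₂ < q → dStar μ p₁ q ≤ dStar μ p₂ q) := by
  constructor
  · intro p s hp hpq hs
    have hqp : 0 < q - p := by linarith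
    have hs2p : 0 < s - 2 * p := by linarith
    constructor
    · have hu : HasDerivAt (fun p' : ℝ => s * p' * q) (s * q) p := by
        simpa using ((hasDerivAt_id p).const_mul s).mul_const q
      have h₁ : HasDerivAt (fun p' : ℝ => q - p') (-1) p := by
        simpa using (hasDerivAt_id p).const_sub q
      have h₂ : HasDerivAt (fun p' : ℝ => s - 2 * p') (-2) p := by
        simpa using ((hasDerivAt_id p).const_mul 2).const_sub s
      have hv : HasDerivAt (fun p' : ℝ => (q - p') * (s - 2 * p'))
          (-1 * (s - 2 * p) + (q - p) * -2) p := h₁.mul h₂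
      have hv0 : (q - p) * (s - 2 * p) ≠ 0 := (mul_pos hqp hs2p).ne'
      have := hu.div hv hv0
      refine this.congr_deriv ?_
      rw [div_eq_div_iff (pow_pos (mul_pos hqp hs2p) 2).ne'
        (mul_pos (pow_pos hqp 2) (pow_pos hs2p 2)).ne']
      ring
    · apply div_pos
      · have : 2 * p * p < s * q := by nlinarith
        nlinarith
      · exact mul_pos (pow_pos hqp 2) (pow_pos hs2p 2)
  · intro p₁ p₂ hp₁ h12 h2q
    have hp₂ : 0 < p₂ := lt_of_lt_of_le hp₁ h12
    have hW₂ : (wassersteinDimSet μ p₂ q).Nonempty := W_nonempty μ hq hp₂ h2q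
    have hbdd : BddBelow (wassersteinDimSet μ p₁ q) :=
      ⟨0, fun x hx => by have := hx.1; linarith⟩
    apply le_csInf hW₂
    intro s hs
    obtain ⟨s', hs'le, hs'mem⟩ := claimD μ hq hp₁ h12 h2q hs
    exact le_trans (csInf_le hbdd hs'mem) hs'le
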